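/- Suppose Assumption 1 holds and that, upon each exchange, the base station and the communicating agent update their respective variables via Algorithm 1. Then for every k∈Q and every time t≥0, the vertex k belongs to at least one agent's coverage region P_i. -/
import Mathlib


open scoped Classical ENNReal

noncomputable section

universe u

/-- A weighted graph environment `G(Q) = (Q, E)` with undirected edges and
positive edge weights. -/
structure Env (V : Type u) where
  adj : V → V → Prop
  adj_symm : ∀ u v, adj u v → adj v u
  adj_irrefl : ∀ v, ¬ adj v v
  w : V → V → ℝ
  w_pos : ∀ u v, adj u v → 0 < w u v
  w_symm : ∀ u v, w u v = w v u

variable {V : Type u}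

/-- `PathIn G S p` : `p` is a (nonempty) walk of `G` all of whose vertices lie in `S`. -/
def PathIn (G : Env V) (S : Set V) : List V → Prop
  | [] => False
  | [v] => v ∈ S
  | u :: v :: rest => u ∈ S ∧ G.adj u v ∧ PathIn G S (v :: rest)

/-- Total weighted length of a walk. -/
def pathLen (G : Env V) : List V → ℝ≥0∞
  | [] => 0
  | [_] => 0
  | u :: v :: rest => ENNReal.ofReal (G.w u v) + pathLen G (v :: rest)

/-- Weighted shortest-path distance between two vertices inside the subgraph of `G`
induced on `S` (`∞` if no connecting path inside `S` exists). -/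
def dIn (G : Env V) (S : Set V) (a b : V) : ℝ≥0∞ :=
  sInf {L : ℝ≥0∞ | ∃ p : List V, PathIn G S p ∧ p.head? = some a ∧
    p.getLast? = some b ∧ pathLen G p = L}

/-- Length of a shortest path inside the subgraph induced on `S` from `a` to the set `B`. -/
def dInSet (G : Env V) (S : Set V) (a : V) (B : Set V) : ℝ≥0∞ :=
  ⨅ b ∈ B, dIn G S a b

/-- A subset `S` is connected if its induced subgraph is connected. -/
def ConnIn (G : Env V) (S : Set V) : Prop :=
  ∀ a ∈ S, ∀ b ∈ S, ∃ p : List V, PathIn G S p ∧ p.head? = some a ∧ p.getLast? = some b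

/-- A vertex `k` is adjacent to a set `S`. -/
def AdjTo (G : Env V) (k : V) (S : Set V) : Prop :=
  k ∉ S ∧ ∃ v ∈ S, G.adj k v

/-- An `m`-covering of the vertex set. -/
def IsCovering {m : ℕ} (P : Fin m → Set V) : Prop :=
  (∀ v : V, ∃ i, v ∈ P i) ∧ ∀ i, (P i).Nonempty

/-- An `m`-partition of the vertex set. -/
def IsPartition {m : ℕ} (P : Fin m → Set V) : Prop :=
  IsCovering P ∧ ∀ i j : Fin m, i ≠ j → P i ∩ P j = ∅

/-- Conditions (1) and (2) of the additive-subset definition (together with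
connectivity of the candidate set `S`). -/
def AddCond {m : ℕ} (G : Env V) (s : Fin m → ℝ) (P : Fin m → Set V) (c : Fin m → V)
    (T : Fin m → ℝ) (i : Fin m) (Pid : Set V) (k : V) (S : Set V) : Prop :=
  ConnIn G S ∧ Pid ⊆ S ∧
    ∀ j : Fin m, j ≠ i → ∀ h ∈ S ∩ P j,
      T j = 0 ∧
      ENNReal.ofReal (1 / s i) * dIn G S h k < ENNReal.ofReal (1 / s j) * dIn G (P j) h (c j)

/-- `S` is *the* additive subset `P_i^add(k)` : the largest connected subset
satisfying conditions (1) and (2); it contains every subset satisfying them. -/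
def IsAddSet {m : ℕ} (G : Env V) (s : Fin m → ℝ) (P : Fin m → Set V) (c : Fin m → V)
    (T : Fin m → ℝ) (i : Fin m) (Pid : Set V) (k : V) (S : Set V) : Prop :=
  AddCond G s P c T i Pid k S ∧ ∀ S' : Set V, AddCond G s P c T i Pid k S' → S' ⊆ S

/-- The coverage cost `H(c, P, t)`. -/
def Hcost {m : ℕ} [Fintype V] (G : Env V) (s : Fin m → ℝ) (Φ : V → ℝ → ℝ)
    (c : Fin m → V) (P : Fin m → Set V) (t : ℝ) : ℝ≥0∞ :=
  ∑ k : V,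
    sInf {x : ℝ≥0∞ | ∃ i : Fin m, k ∈ P i ∧ x = ENNReal.ofReal (1 / s i) * dIn G (P i) k (c i)} *
      ENNReal.ofReal (Φ k t)

/-- The complete state maintained by the base station together with all the
agents' local variables. -/
structure CovState (V : Type u) (m : ℕ) where
  P : Fin m → Set V
  c : Fin m → V
  ID : V → Fin m
  T : Fin m → ℝ
  ω : Fin m → ℝ
  PA : Fin m → Set V
  cA : Fin m → V
  Ppd : Fin m → Set V
  τA : Fin m → ℝ
  ωA : Fin m → ℝ

namespace CovState

variable {m : ℕ}

/-- `P_i^ID`, the set of vertices whose identifier equals `i`. -/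
def Pid (σ : CovState V m) (i : Fin m) : Set V := {k | σ.ID k = i}

/-- The local likelihood function `Φ_i^A`. -/
def ΦA (σ : CovState V m) (Φ : V → ℝ → ℝ) (i : Fin m) (k : V) (t : ℝ) : ℝ :=
  if k ∈ σ.PA i ∧ (σ.τA i ≤ t - σ.ωA i ∨ k ∉ σ.Ppd i) then Φ k t else 0

/-- The prohibited region `Proh_i(t)`. -/
def Proh (σ : CovState V m) (i : Fin m) (t : ℝ) : Set V :=
  {k ∈ σ.PA i | t - σ.ωA i < σ.τA i ∧ k ∈ σ.Ppd i}

/-- Continuous (flow) evolution of the state for `δ` time units: only the timers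
change, each decreasing at unit rate until reaching `0`. -/
def decay (σ : CovState V m) (δ : ℝ) : CovState V m :=
  { σ with T := fun i => max (σ.T i - δ) 0 }

end CovState

/-- The trivial branch of Algorithm 1 (`T_i > 0` and `P_i^* = P_i`): only the
timing variables of the communicating agent are touched. -/
def NoopUpdate {m : ℕ} (i : Fin m) (t0 : ℝ) (σ σ' : CovState V m) : Prop :=
  σ' = { σ with τA := Function.update σ.τA i (σ.τA i - t0 + σ.ω i),
                ωA := Function.update σ.ωA i t0,
                ω := Function.update σ.ω i t0 }

/-- The main branch of Algorithm 1 (together with the timer update, Algorithm 2),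
executed upon an exchange between the base station and agent `i` at time `t0`. -/
def FullUpdate {m : ℕ} [Fintype V] (G : Env V) (s : Fin m → ℝ) (Φ : V → ℝ → ℝ)
    (Δbar ΔH : ℝ) (i : Fin m) (t0 : ℝ) (σ σ' : CovState V m) : Prop :=
  ∃ (cstar : V) (Pstar : Set V),
    -- `(cstar, Pstar)` is one of the candidate configurations:
    ((cstar = σ.c i ∧ Pstar = σ.Pid i) ∨
      (cstar ∈ σ.Pid i ∧ IsAddSet G s σ.P σ.c σ.T i (σ.Pid i) cstar Pstar)) ∧
    -- and it minimizes the cost `H` among all candidate configurations: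
    (∀ (k : V) (S : Set V),
      ((k = σ.c i ∧ S = σ.Pid i) ∨
        (k ∈ σ.Pid i ∧ IsAddSet G s σ.P σ.c σ.T i (σ.Pid i) k S)) →
      Hcost G s Φ (Function.update σ.c i cstar) (Function.update σ.P i Pstar) t0 ≤
        Hcost G s Φ (Function.update σ.c i k) (Function.update σ.P i S) t0) ∧
    σ'.P = Function.update σ.P i Pstar ∧
    σ'.PA = Function.update σ.PA i Pstar ∧
    σ'.c = Function.update σ.c i cstar ∧
    σ'.cA = Function.update σ.cA i cstar ∧
    σ'.Ppd = Function.update σ.Ppd i (Pstar \ σ.Pid i) ∧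
    σ'.ω = Function.update σ.ω i t0 ∧
    σ'.ωA = Function.update σ.ωA i t0 ∧
    σ'.ID = (fun k => if k ∈ Pstar then i else σ.ID k) ∧
    (∀ j : Fin m, j ≠ i → (σ.P j ∩ Pstar).Nonempty → σ'.T j = σ.ω j + Δbar - t0) ∧
    (∀ j : Fin m, j ≠ i → ¬(σ.P j ∩ Pstar).Nonempty → σ'.T j = σ.T j) ∧
    -- `T_i := Δ_max^Bf + Δ_H`, where `Δ_max^Bf` is as in Algorithm 2 (max ∅ := 0):
    σ'.T i =
      max
        (sSup {x : ℝ | ∃ k ∈ σ.P i \ Pstar,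
          x = (1 / s i) * (dInSet G (σ.P i) k (Pstar \ (Pstar \ σ.Pid i))).toReal})
        (sSup {x : ℝ | ∃ j : Fin m, j ≠ i ∧ (σ.P j ∩ Pstar).Nonempty ∧
          x = σ.ω j + Δbar +
            sSup {y : ℝ | ∃ k ∈ σ.P j ∩ Pstar,
              y = (1 / s j) * (dInSet G (σ.P j) k (σ.P j \ Pstar)).toReal} - t0}) + ΔH ∧
    -- `τ_i^A := Δ_max^Bf`:
    σ'.τA = Function.update σ.τA i (σ'.T i - ΔH)

/-- The one-to-base-station update of Algorithm 1 performed at time `t0` upon an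
exchange with agent `i`; `σ` is the state just before and `σ'` just after. -/
def UpdateAt {m : ℕ} [Fintype V] (G : Env V) (s : Fin m → ℝ) (Φ : V → ℝ → ℝ)
    (Δbar ΔH : ℝ) (i : Fin m) (t0 : ℝ) (σ σ' : CovState V m) : Prop :=
  (0 < σ.T i ∧ σ.Pid i = σ.P i ∧ NoopUpdate i t0 σ σ') ∨
  (¬(0 < σ.T i ∧ σ.Pid i = σ.P i) ∧ FullUpdate G s Φ Δbar ΔH i t0 σ σ')

/-- Assumption 1 (initialization). -/
def InitOK {m : ℕ} (G : Env V) (ΔH : ℝ) (σ : CovState V m) : Prop :=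
  IsPartition σ.P ∧ (∀ i, ConnIn G (σ.P i)) ∧
    ∀ i : Fin m,
      σ.PA i = σ.P i ∧ σ.P i = σ.Pid i ∧ σ.cA i = σ.c i ∧ σ.c i ∈ σ.P i ∧
      σ.Ppd i = ∅ ∧ σ.T i = 0 ∧ σ.ω i = 0 ∧ σ.ωA i = 0 ∧ σ.τA i = -ΔH

/-- An execution of the asynchronous one-to-base-station coverage scheme:
exchanges occur at the times `etime n` with the agents `eagent n`, successive
exchanges are separated by at least `Δlow`, each agent communicates at least
every `Δ̄` time units, the state is initialized according to Assumption 1,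
flows (only the timers decay) in between exchanges, and jumps according to
Algorithm 1 at each exchange. -/
structure Execution [Fintype V] (G : Env V) (m : ℕ) (s : Fin m → ℝ) (Φ : V → ℝ → ℝ)
    (Δlow Δbar ΔH : ℝ) where
  etime : ℕ → ℝ
  eagent : ℕ → Fin m
  state : ℝ → CovState V m
  s_pos : ∀ i, 0 < s i
  Δlow_pos : 0 < Δlow
  Δbar_pos : 0 < Δbar
  ΔH_pos : 0 < ΔH
  Φ_nonneg : ∀ k t, 0 ≤ Φ k t
  Φ_sum : ∀ t : ℝ, ∑ k : V, Φ k t = 1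
  etime_pos : ∀ n, 0 < etime n
  etime_sep : ∀ n, etime n + Δlow ≤ etime (n + 1)
  persistent : ∀ (i : Fin m) (t : ℝ), 0 ≤ t →
    ∃ n, eagent n = i ∧ t ≤ etime n ∧ etime n ≤ t + Δbar
  init : InitOK G ΔH (state 0)
  flow : ∀ t₁ t₂ : ℝ, 0 ≤ t₁ → t₁ ≤ t₂ →
    (∀ n, ¬(t₁ < etime n ∧ etime n ≤ t₂)) →
    state t₂ = (state t₁).decay (t₂ - t₁)
  jump : ∀ (n : ℕ) (t₁ : ℝ), 0 ≤ t₁ → t₁ < etime n →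
    (∀ p, ¬(t₁ < etime p ∧ etime p < etime n)) →
    UpdateAt G s Φ Δbar ΔH (eagent n) (etime n)
      ((state t₁).decay (etime n - t₁)) (state (etime n))

/-- Twice the sum, over the edges of `G`, of the graph distance between the
endpoints, halved (i.e. the sum over unordered edges). -/
def edgeSum [Fintype V] (G : Env V) : ℝ :=
  (1 / 2) * ∑ p : V × V, if G.adj p.1 p.2 then (dIn G Set.univ p.1 p.2).toReal else 0

/-- `d̄ := max_i (1/s_i) · Σ_{{k1,k2} ∈ E} d_Q(k1,k2)`. -/
def dbar {m : ℕ} [Fintype V] (G : Env V) (s : Fin m → ℝ) : ℝ :=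
  sSup {x : ℝ | ∃ i : Fin m, x = (1 / s i) * edgeSum G}

end

section AuxProof

variable {V : Type*} [Fintype V] [DecidableEq V] {m : ℕ}
  {G : Env V} {s : Fin m → ℝ} {Φ : V → ℝ → ℝ} {Δlow Δbar ΔH : ℝ}

/-- The key invariant: every vertex belongs to the region of the agent named by
its identifier. -/
def CovInv (σ : CovState V m) : Prop := ∀ k : V, k ∈ σ.P (σ.ID k)

lemma covInv_decay {σ : CovState V m} {δ : ℝ} (h : CovInv σ) :
    CovInv (σ.decay δ) := h

lemma covInv_init {σ : CovState V m} (h : InitOK G ΔH σ) : CovInv σ := by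
  intro k
  rw [(h.2.2 (σ.ID k)).2.1]
  exact rfl

lemma covInv_update {i : Fin m} {t0 : ℝ} {σ σ' : CovState V m}
    (h : UpdateAt G s Φ Δbar ΔH i t0 σ σ') (hσ : CovInv σ) : CovInv σ' := by
  rcases h with ⟨_, _, hnoop⟩ | ⟨_, hfull⟩
  · subst hnoop; exact fun k => hσ k
  · obtain ⟨cstar, Pstar, hcand, _, hP, _, _, _, _, _, _, hID, _, _, _, _⟩ := hfull
    have hPidSub : σ.Pid i ⊆ Pstar := by
      rcases hcand with ⟨_, h2⟩ | ⟨_, hadd⟩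
      · exact h2.superset
      · exact hadd.1.2.1
    intro k
    rw [hP, hID]
    show k ∈ Function.update σ.P i Pstar (if k ∈ Pstar then i else σ.ID k)
    by_cases hk : k ∈ Pstar
    · rw [if_pos hk, Function.update_self]
      exact hk
    · have hne : σ.ID k ≠ i := fun he => hk (hPidSub he)
      rw [if_neg hk, Function.update_of_ne hne]
      exact hσ k

variable (E : Execution G m s Φ Δlow Δbar ΔH)

lemma etime_mono_le {p q : ℕ} (h : p ≤ q) : E.etime p ≤ E.etime q := by
  induction q, h using Nat.le_induction with
  | base => exact le_rfl
  | succ q hq ih =>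
    have h1 := E.etime_sep q
    have h2 := E.Δlow_pos
    linarith

lemma etime_mono_lt {p q : ℕ} (h : p < q) : E.etime p < E.etime q := by
  have h1 := E.etime_sep p
  have h2 := E.Δlow_pos
  have h3 := etime_mono_le E h
  linarith

lemma etime_lb (n : ℕ) : E.etime 0 + n * Δlow ≤ E.etime n := by
  induction n with
  | zero => simp
  | succ n ih =>
    have h1 := E.etime_sep n
    push_cast
    linarith

lemma covInv_at_etime (n : ℕ) : CovInv (E.state (E.etime n)) := by
  induction n with
  | zero =>
    have hnb : ∀ p, ¬(0 < E.etime p ∧ E.etime p < E.etime 0) := by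
      rintro p ⟨_, h2⟩
      exact absurd (etime_mono_le E (Nat.zero_le p)) (not_le.mpr h2)
    have hj := E.jump 0 0 le_rfl (E.etime_pos 0) hnb
    exact covInv_update hj (covInv_decay (covInv_init E.init))
  | succ n ih =>
    have hnb : ∀ p, ¬(E.etime n < E.etime p ∧ E.etime p < E.etime (n + 1)) := by
      rintro p ⟨h1, h2⟩
      rcases le_or_gt p n with hp | hp
      · exact absurd (etime_mono_le E hp) (not_le.mpr h1)
      · exact absurd (etime_mono_le E hp) (not_le.mpr h2)
    have hj := E.jump (n + 1) (E.etime n) (le_of_lt (E.etime_pos n))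
      (etime_mono_lt E (Nat.lt_succ_self n)) hnb
    exact covInv_update hj (covInv_decay ih)

end AuxProof

/-- Theorem 3, statement 1.  Under Assumption 1 and
Algorithm 1 updates, every vertex `k ∈ Q` belongs, at every time `t ≥ 0`, to at
least one agent's coverage region `P_i`. -/
theorem vertex_always_covered {V : Type*} [Fintype V] [DecidableEq V] {m : ℕ}
    (G : Env V) (s : Fin m → ℝ) (Φ : V → ℝ → ℝ) (Δlow Δbar ΔH : ℝ)
    (E : Execution G m s Φ Δlow Δbar ΔH) :
    ∀ (k : V) (t : ℝ), 0 ≤ t → ∃ i : Fin m, k ∈ (E.state t).P i := by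
  intro k t ht
  suffices h : CovInv (E.state t) by exact ⟨_, h k⟩
  by_cases hex : ∃ n, E.etime n ≤ t
  · obtain ⟨n0, hn0⟩ := hex
    obtain ⟨N, hN⟩ := exists_nat_gt ((t - E.etime 0) / Δlow)
    have hbound : ∀ p, E.etime p ≤ t → p ≤ N := by
      intro p hp
      by_contra hpN
      push_neg at hpN
      have hcast : (N : ℝ) ≤ p := Nat.cast_le.mpr (le_of_lt hpN)
      have h1 := etime_lb E p
      have h2 : t - E.etime 0 < (p : ℝ) * Δlow := by
        have := (div_lt_iff₀ E.Δlow_pos).mp (lt_of_lt_of_le hN hcast)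
        linarith
      linarith
    set n := Nat.findGreatest (fun p => E.etime p ≤ t) N with hn
    have hPn : E.etime n ≤ t := Nat.findGreatest_spec (P := fun p => E.etime p ≤ t) (hbound n0 hn0) hn0
    have hnone : ∀ p, ¬(E.etime n < E.etime p ∧ E.etime p ≤ t) := by
      rintro p ⟨h1, h2⟩
      have hpN := hbound p h2
      have hpn : p ≤ n := by
        by_contra hc
        push_neg at hc
        exact Nat.findGreatest_is_greatest hc hpN h2
      exact absurd (etime_mono_le E hpn) (not_le.mpr h1)
    have hflow := E.flow (E.etime n) t (le_of_lt (E.etime_pos n)) hPn hnone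
    rw [hflow]
    exact covInv_decay (covInv_at_etime E n)
  · push_neg at hex
    have hnone : ∀ p, ¬((0 : ℝ) < E.etime p ∧ E.etime p ≤ t) := by
      rintro p ⟨_, h2⟩
      exact absurd h2 (not_le.mpr (hex p))
    have hflow := E.flow 0 t le_rfl ht hnone
    rw [hflow]
    exact covInv_decay (covInv_init E.init)
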